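/- Let F be a field whose characteristic is not 2, and let A ∈ M_n(F). Then A is a sum of two square-zero matrices if and only if there exists an involution V ∈ M_n(F) (i.e., V² = I_n) such that AV = −VA. -/

import Mathlib

open Module Submodule

universe u

section Aux

variable {F : Type*} [Field F] {M : Type*} [AddCommGroup M] [Module F M]

lemma glue_aux {p q : Submodule F M} (h : IsCompl p q) (f : Module.End F M)
    (hp : ∀ x ∈ p, f x ∈ p) (hq : ∀ x ∈ q, f x ∈ q)
    (Hp : ∃ v : Module.End F p, v * v = 1 ∧ v * (f.restrict hp) = -((f.restrict hp) * v))
    (Hq : ∃ v : Module.End F q, v * v = 1 ∧ v * (f.restrict hq) = -((f.restrict hq) * v)) :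
    ∃ v : Module.End F M, v * v = 1 ∧ v * f = -(f * v) := by
  obtain ⟨a, ha1, ha2⟩ := Hp
  obtain ⟨b, hb1, hb2⟩ := Hq
  set e := Submodule.prodEquivOfIsCompl p q h with he
  have hconj : ∀ g g' : Module.End F (p × q), e.conj (g * g') = e.conj g * e.conj g' := by
    intro g g'
    rw [Module.End.mul_eq_comp, LinearEquiv.conj_comp, Module.End.mul_eq_comp]
  have key : f = e.conj ((f.restrict hp).prodMap (f.restrict hq)) := by
    apply LinearMap.ext
    intro x
    obtain ⟨z, rfl⟩ := e.surjective x
    rw [LinearEquiv.conj_apply]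
    simp only [LinearMap.coe_comp, Function.comp_apply, LinearEquiv.coe_coe,
      LinearEquiv.symm_apply_apply]
    rw [he, Submodule.coe_prodEquivOfIsCompl', Submodule.coe_prodEquivOfIsCompl']
    simp [LinearMap.restrict_coe_apply, map_add]
  refine ⟨e.conj (a.prodMap b), ?_, ?_⟩
  · rw [← hconj, LinearMap.prodMap_mul, ha1, hb1]
    have : (1 : Module.End F p).prodMap (1 : Module.End F q) = 1 := by
      ext z <;> rfl
    rw [this]
    show e.conj 1 = 1
    rw [Module.End.one_eq_id, LinearEquiv.conj_id]
    rfl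
  · rw [key, ← hconj, ← hconj, LinearMap.prodMap_mul, LinearMap.prodMap_mul, ha2, hb2]
    have : (-((f.restrict hp) * a)).prodMap (-((f.restrict hq) * b))
        = -(((f.restrict hp) * a).prodMap ((f.restrict hq) * b)) := by
      ext z <;> rfl
    rw [this]
    have hneg : ∀ g : Module.End F (p × q), e.conj (-g) = -(e.conj g) := fun g => e.conj.map_neg g
    rw [hneg]

lemma inv_case [FiniteDimensional F M] (h2 : (2 : F) ≠ 0) (f p q : Module.End F M)
    (hinj : Function.Injective f) (hp : p * p = 0) (hq : q * q = 0) (hpq : p + q = f + f) :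
    ∃ v : Module.End F M, v * v = 1 ∧ v * f = -(f * v) := by
  classical
  -- kernels are complementary
  have hdisj : Disjoint (LinearMap.ker p) (LinearMap.ker q) := by
    rw [Submodule.disjoint_def]
    intro x hx hx'
    rw [LinearMap.mem_ker] at hx hx'
    have : f x + f x = 0 := by
      have := congrFun (congrArg DFunLike.coe hpq) x
      simp only [LinearMap.add_apply, hx, hx'] at this
      simpa using this.symm
    have h2fx : (2 : F) • f x = 0 := by rw [two_smul]; exact this
    have hfx : f x = 0 := by
      rcases smul_eq_zero.mp h2fx with h | h
      · exact absurd h h2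
      · exact h
    have : f x = f 0 := by simpa using hfx
    exact hinj this
  have hrk : ∀ r : Module.End F M, r * r = 0 →
      finrank F M ≤ finrank F (LinearMap.ker r) + finrank F (LinearMap.ker r) := by
    intro r hr
    have hle : LinearMap.range r ≤ LinearMap.ker r := by
      rw [LinearMap.range_le_ker_iff, ← Module.End.mul_eq_comp]
      exact hr
    have := LinearMap.finrank_range_add_finrank_ker r
    have h2' : finrank F (LinearMap.range r) ≤ finrank F (LinearMap.ker r) :=
      Submodule.finrank_mono hle
    omega
  have hcodis : LinearMap.ker p ⊔ LinearMap.ker q = ⊤ := by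
    apply Submodule.eq_top_of_finrank_eq
    have heq := Submodule.finrank_sup_add_finrank_inf_eq (LinearMap.ker p) (LinearMap.ker q)
    rw [hdisj.eq_bot, finrank_bot] at heq
    have hle : finrank F ↥(LinearMap.ker p ⊔ LinearMap.ker q) ≤ finrank F M :=
      Submodule.finrank_le _
    have h1 := hrk p hp
    have h2' := hrk q hq
    omega
  have hcompl : IsCompl (LinearMap.ker p) (LinearMap.ker q) :=
    ⟨hdisj, codisjoint_iff.mpr hcodis⟩
  set e := Submodule.prodEquivOfIsCompl _ _ hcompl with he
  set v := e.conj ((1 : Module.End F (LinearMap.ker p)).prodMap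
    (-1 : Module.End F (LinearMap.ker q))) with hv
  have hvp : ∀ u : LinearMap.ker p, v ↑u = ↑u := by
    intro u
    rw [hv, LinearEquiv.conj_apply]
    simp only [LinearMap.coe_comp, Function.comp_apply, LinearEquiv.coe_coe]
    rw [he, Submodule.prodEquivOfIsCompl_symm_apply_left]
    rw [Submodule.coe_prodEquivOfIsCompl']
    simp
  have hvq : ∀ u : LinearMap.ker q, v ↑u = -↑u := by
    intro u
    rw [hv, LinearEquiv.conj_apply]
    simp only [LinearMap.coe_comp, Function.comp_apply, LinearEquiv.coe_coe]
    rw [he, Submodule.prodEquivOfIsCompl_symm_apply_right]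
    rw [Submodule.coe_prodEquivOfIsCompl']
    simp
  refine ⟨v, ?_, ?_⟩
  · -- involution
    apply LinearMap.ext
    intro x
    obtain ⟨z, rfl⟩ := e.surjective x
    rw [he, Submodule.coe_prodEquivOfIsCompl']
    simp only [Module.End.mul_apply, Module.End.one_apply]
    rw [map_add, hvp z.1, hvq z.2, map_add, hvp z.1]
    have : v (-(z.2 : M)) = -(v ↑z.2) := map_neg v _
    rw [this, hvq z.2]
    abel
  · -- anticommutation
    -- f maps ker p into ker q and ker q into ker p
    have hfu : ∀ u : M, u ∈ LinearMap.ker p → f u ∈ LinearMap.ker q ∧ f u + f u = q u := by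
      intro u hu
      rw [LinearMap.mem_ker] at hu
      have hq2 : f u + f u = q u := by
        have := congrFun (congrArg DFunLike.coe hpq) u
        simp only [LinearMap.add_apply, hu] at this
        simpa using this.symm
      constructor
      · rw [LinearMap.mem_ker]
        have : q (f u + f u) = q (q u) := by rw [hq2]
        have hqq : q (q u) = 0 := by
          have := congrFun (congrArg DFunLike.coe hq) u
          simpa [Module.End.mul_apply] using this
        rw [hqq, map_add] at this
        have h2fq : (2 : F) • q (f u) = 0 := by rw [two_smul]; exact this
        rcases smul_eq_zero.mp h2fq with h | h
        · exact absurd h h2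
        · exact h
      · exact hq2
    have hfw : ∀ u : M, u ∈ LinearMap.ker q → f u ∈ LinearMap.ker p := by
      intro u hu
      rw [LinearMap.mem_ker] at hu
      have hp2 : f u + f u = p u := by
        have := congrFun (congrArg DFunLike.coe hpq) u
        simp only [LinearMap.add_apply, hu] at this
        simpa using this.symm
      rw [LinearMap.mem_ker]
      have : p (f u + f u) = p (p u) := by rw [hp2]
      have hpp : p (p u) = 0 := by
        have := congrFun (congrArg DFunLike.coe hp) u
        simpa [Module.End.mul_apply] using this
      rw [hpp, map_add] at this
      have h2fp : (2 : F) • p (f u) = 0 := by rw [two_smul]; exact this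
      rcases smul_eq_zero.mp h2fp with h | h
      · exact absurd h h2
      · exact h
    apply LinearMap.ext
    intro x
    obtain ⟨z, rfl⟩ := e.surjective x
    rw [he, Submodule.coe_prodEquivOfIsCompl']
    simp only [Module.End.mul_apply, LinearMap.neg_apply]
    have hz1 : v (f ↑z.1) = -(f ↑z.1) := hvq ⟨f ↑z.1, (hfu _ z.1.2).1⟩
    have hz2 : v (f ↑z.2) = f ↑z.2 := hvp ⟨f ↑z.2, hfw _ z.2.2⟩
    have lhs : v (f ((z.1 : M) + (z.2 : M))) = -(f ↑z.1) + f ↑z.2 := by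
      rw [map_add f, map_add v, hz1, hz2]
    have rhs : f (v ((z.1 : M) + (z.2 : M))) = f ↑z.1 - f ↑z.2 := by
      rw [map_add v, hvp z.1, hvq z.2, map_add f, map_neg f]
      abel
    rw [lhs, rhs]
    abel

end Aux

section Main

variable {F : Type*} [Field F]

lemma nilp_aux (F : Type*) [Field F] :
    ∀ (N : ℕ) (M : Type u) [AddCommGroup M] [Module F M] [FiniteDimensional F M],
      finrank F M ≤ N → ∀ f : Module.End F M, IsNilpotent f →
      ∃ v : Module.End F M, v * v = 1 ∧ v * f = -(f * v) := by
  intro N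
  induction N with
  | zero =>
    intro M _ _ _ hdim f _
    have : Subsingleton M := Module.finrank_zero_iff.mp (Nat.le_zero.mp hdim)
    exact ⟨1, Subsingleton.elim _ _, Subsingleton.elim _ _⟩
  | succ N ih =>
    intro M _ _ _ hdim f hnil
    by_cases hM : Subsingleton M
    · exact ⟨1, Subsingleton.elim _ _, Subsingleton.elim _ _⟩
    have : Nontrivial M := not_subsingleton_iff_nontrivial.mp hM
    by_cases hf0 : f = 0
    · refine ⟨1, by simp, by simp [hf0]⟩
    · classical
      obtain ⟨m, hm⟩ := hnil
      have hex : ∃ m, f ^ m = 0 := ⟨m, hm⟩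
      set k := Nat.find hex with hkdef
      have hk : f ^ k = 0 := Nat.find_spec hex
      have hmin : ∀ j, j < k → f ^ j ≠ 0 := fun j hj => Nat.find_min hex hj
      have hk1 : 1 ≤ k := by
        by_contra hc
        push_neg at hc
        interval_cases k
        · rw [pow_zero] at hk
          exact one_ne_zero hk
      obtain ⟨x, hx⟩ : ∃ x : M, (f ^ (k - 1)) x ≠ 0 := by
        by_contra hc
        push_neg at hc
        exact hmin (k - 1) (by omega) (LinearMap.ext fun y => hc y)
      obtain ⟨lam0, hlam0⟩ : ∃ φ : Module.Dual F M, φ ((f ^ (k - 1)) x) ≠ 0 := by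
        by_contra hc
        push_neg at hc
        exact hx ((Module.forall_dual_apply_eq_zero_iff F _).mp hc)
      set lam : M →ₗ[F] F := (lam0 ((f ^ (k - 1)) x))⁻¹ • lam0 with hlamdef
      have hlam : lam ((f ^ (k - 1)) x) = 1 := by
        rw [hlamdef, LinearMap.smul_apply, smul_eq_mul]
        exact inv_mul_cancel₀ hlam0
      set g : Fin k → M := fun i => (f ^ (i : ℕ)) x with hg
      -- core coefficient-killing step
      have core : ∀ c : Fin k → F, (∀ m, m < k → lam ((f ^ m) (∑ i, c i • g i)) = 0) →
          ∀ i : Fin k, (∀ j : Fin k, (j : ℕ) < (i : ℕ) → c j = 0) → c i = 0 := by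
        intro c hc i hsmall
        have hmlt : k - 1 - (i : ℕ) < k := by omega
        have h0 := hc (k - 1 - (i : ℕ)) hmlt
        have hterm : ∀ j : Fin k,
            (f ^ (k - 1 - (i : ℕ))) (g j) = (f ^ (k - 1 - (i : ℕ) + (j : ℕ))) x := by
          intro j
          rw [hg]
          simp only []
          rw [← Module.End.mul_apply, ← pow_add]
        rw [map_sum] at h0
        simp only [map_smul] at h0
        rw [map_sum] at h0
        simp only [map_smul, smul_eq_mul, hterm] at h0
        rw [Finset.sum_eq_single i] at h0
        · have : k - 1 - (i : ℕ) + (i : ℕ) = k - 1 := by omega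
          rw [this, hlam, mul_one] at h0
          exact h0
        · intro j _ hji
          rcases Nat.lt_or_ge (j : ℕ) (i : ℕ) with h | h
          · rw [hsmall j h, zero_mul]
          · have hgt : (i : ℕ) < (j : ℕ) := by
              rcases Nat.lt_or_ge (i : ℕ) (j : ℕ) with h' | h'
              · exact h'
              · exact absurd (Fin.ext (by omega)) hji
            have hz : f ^ (k - 1 - (i : ℕ) + (j : ℕ)) = 0 :=
              pow_eq_zero_of_le (by omega) hk
            rw [hz]
            simp
        · intro hni
          exact absurd (Finset.mem_univ i) hni
      have key : ∀ c : Fin k → F, (∀ m, m < k → lam ((f ^ m) (∑ i, c i • g i)) = 0) →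
          ∀ i : Fin k, c i = 0 := by
        intro c hc
        have H : ∀ n : ℕ, ∀ i : Fin k, (i : ℕ) ≤ n → c i = 0 := by
          intro n
          induction n with
          | zero =>
            intro i hi
            exact core c hc i (fun j hj => absurd hj (by omega))
          | succ n ihn =>
            intro i hi
            rcases Nat.lt_or_ge (i : ℕ) (n + 1) with h | h
            · exact ihn i (by omega)
            · exact core c hc i (fun j hj => ihn j (by omega))
        exact fun i => H (i : ℕ) i le_rfl
      have hli : LinearIndependent F g := by
        rw [Fintype.linearIndependent_iff]
        intro c hc
        apply key c
        intro m _
        rw [hc]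
        simp
      set Z := Submodule.span F (Set.range g) with hZ
      have hZdim : finrank F Z = k := by
        rw [hZ, finrank_span_eq_card hli, Fintype.card_fin]
      set Phi : M →ₗ[F] (Fin k → F) := LinearMap.pi (fun i : Fin k => lam ∘ₗ (f ^ (i : ℕ)))
        with hPhi
      set W := LinearMap.ker Phi with hW
      have hWmem : ∀ y : M, y ∈ W ↔ ∀ m, m < k → lam ((f ^ m) y) = 0 := by
        intro y
        simp only [hW, LinearMap.mem_ker, hPhi, funext_iff, LinearMap.pi_apply,
          LinearMap.comp_apply, Pi.zero_apply]
        constructor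
        · intro h m hm
          exact h ⟨m, hm⟩
        · intro h i
          exact h (i : ℕ) i.2
      have hWf : ∀ y ∈ W, f y ∈ W := by
        intro y hy
        rw [hWmem] at hy ⊢
        intro m hm
        have hstep : (f ^ m) (f y) = (f ^ (m + 1)) y := by
          rw [← Module.End.mul_apply, ← pow_succ]
        rw [hstep]
        rcases Nat.lt_or_ge (m + 1) k with h | h
        · exact hy _ h
        · rw [pow_eq_zero_of_le h hk]
          simp
      have hZf : ∀ y ∈ Z, f y ∈ Z := by
        have hmap : Submodule.map f Z ≤ Z := by
          rw [hZ, Submodule.map_span, Submodule.span_le]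
          rintro _ ⟨_, ⟨i, rfl⟩, rfl⟩
          rcases Nat.lt_or_ge ((i : ℕ) + 1) k with h | h
          · have : f (g i) = g ⟨(i : ℕ) + 1, h⟩ := by
              rw [hg]
              simp only []
              rw [← Module.End.mul_apply, ← pow_succ']
            rw [this]
            exact Submodule.subset_span ⟨_, rfl⟩
          · have : f (g i) = 0 := by
              rw [hg]
              simp only []
              rw [← Module.End.mul_apply, ← pow_succ', pow_eq_zero_of_le h hk]
              simp
            rw [this]
            exact Submodule.zero_mem _
        exact fun y hy => hmap ⟨y, hy, rfl⟩
      have hdisj : Disjoint Z W := by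
        rw [Submodule.disjoint_def]
        intro z hzZ hzW
        rw [hZ] at hzZ
        obtain ⟨c, rfl⟩ := (mem_span_range_iff_exists_fun F).mp hzZ
        have hc0 := key c (fun m hm => (hWmem _).mp hzW m hm)
        exact Finset.sum_eq_zero fun i _ => by rw [hc0 i, zero_smul]
      have hdims : finrank F M ≤ finrank F W + k := by
        have h1 := LinearMap.finrank_range_add_finrank_ker Phi
        have h2 : finrank F (LinearMap.range Phi) ≤ k := by
          have h3 := Submodule.finrank_le (LinearMap.range Phi)
          rwa [Module.finrank_fintype_fun_eq_card, Fintype.card_fin] at h3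
        rw [hW]
        omega
      have hcodis : Z ⊔ W = ⊤ := by
        apply Submodule.eq_top_of_finrank_eq
        have heq := Submodule.finrank_sup_add_finrank_inf_eq Z W
        rw [hdisj.eq_bot, finrank_bot] at heq
        have hle : finrank F ↥(Z ⊔ W) ≤ finrank F M := Submodule.finrank_le _
        omega
      have hcompl : IsCompl Z W := ⟨hdisj, codisjoint_iff.mpr hcodis⟩
      -- involution on Z
      let b : Basis (Fin k) F Z := Basis.span hli
      have hb : ∀ i, (b i : M) = g i := fun i => congrArg Subtype.val (Basis.span_apply hli i)
      set vZ : Module.End F Z := Basis.constr b F (fun i => ((-1 : F) ^ (i : ℕ)) • b i)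
        with hvZdef
      have hvZb : ∀ i, vZ (b i) = ((-1 : F) ^ (i : ℕ)) • b i := fun i =>
        Basis.constr_basis b F _ i
      have hvZ1 : vZ * vZ = 1 := by
        apply b.ext
        intro i
        rw [Module.End.mul_apply, hvZb, map_smul, hvZb, smul_smul, ← mul_pow]
        norm_num
      set FZ := f.restrict hZf with hFZdef
      have hFZ : ∀ i : Fin k, ((FZ (b i) : M)) = (f ^ ((i : ℕ) + 1)) x := by
        intro i
        rw [hFZdef, LinearMap.restrict_coe_apply, hb, hg]
        simp only []
        rw [← Module.End.mul_apply, ← pow_succ']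
      have hvZ2 : vZ * FZ = -(FZ * vZ) := by
        apply b.ext
        intro i
        rw [Module.End.mul_apply, LinearMap.neg_apply, Module.End.mul_apply, hvZb, map_smul]
        rcases Nat.lt_or_ge ((i : ℕ) + 1) k with h | h
        · have hFi : FZ (b i) = b ⟨(i : ℕ) + 1, h⟩ := by
            apply Subtype.ext
            rw [hFZ, hb ⟨(i : ℕ) + 1, h⟩, hg]
          rw [hFi, hvZb]
          have hs : ((-1 : F) ^ ((i : ℕ) + 1)) = -((-1 : F) ^ (i : ℕ)) := by ring
          rw [hs, neg_smul]
        · have hFi : FZ (b i) = 0 := by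
            apply Subtype.ext
            rw [hFZ, pow_eq_zero_of_le h hk]
            simp
          rw [hFi, map_zero, smul_zero, neg_zero]
      -- induction on W
      have hWfin : finrank F W ≤ N := by
        have heq := Submodule.finrank_add_eq_of_isCompl hcompl
        omega
      have hWnil : IsNilpotent (f.restrict hWf) := by
        refine ⟨k, ?_⟩
        rw [Module.End.pow_restrict]
        apply LinearMap.ext
        intro y
        apply Subtype.ext
        rw [LinearMap.restrict_coe_apply, hk]
        simp
      obtain ⟨vW, hvW1, hvW2⟩ := ih W hWfin (f.restrict hWf) hWnil
      exact glue_aux hcompl f hZf hWf ⟨vZ, hvZ1, hvZ2⟩ ⟨vW, hvW1, hvW2⟩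

lemma restrict_eq_restrict {M : Type*} [AddCommGroup M] [Module F M] {f g : Module.End F M}
    {p : Submodule F M} (hf : ∀ x ∈ p, f x ∈ p) (hg : ∀ x ∈ p, g x ∈ p) (h : f = g) :
    f.restrict hf = g.restrict hg := by
  subst h; rfl

lemma restrict_mul_restrict' {M : Type*} [AddCommGroup M] [Module F M]
    (f g : Module.End F M) {p : Submodule F M}
    (hf : ∀ x ∈ p, f x ∈ p) (hg : ∀ x ∈ p, g x ∈ p) :
    f.restrict hf * g.restrict hg = (f * g).restrict (fun x hx => hf _ (hg _ hx)) := by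
  ext x
  simp [Module.End.mul_apply, LinearMap.restrict_coe_apply]

lemma restrict_add_restrict' {M : Type*} [AddCommGroup M] [Module F M]
    (f g : Module.End F M) {p : Submodule F M}
    (hf : ∀ x ∈ p, f x ∈ p) (hg : ∀ x ∈ p, g x ∈ p) :
    f.restrict hf + g.restrict hg
      = (f + g).restrict (fun x hx => p.add_mem (hf _ hx) (hg _ hx)) := by
  ext x
  simp [LinearMap.restrict_coe_apply]

theorem end_version {M : Type u} [AddCommGroup M] [Module F M] [FiniteDimensional F M]
    (h2 : (2 : F) ≠ 0) (f s t : Module.End F M) (hs : s * s = 0) (ht : t * t = 0)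
    (hf : f = s + t) :
    ∃ v : Module.End F M, v * v = 1 ∧ v * f = -(f * v) := by
  set d := s - t with hd
  set p := f + d with hpdef
  set q := f - d with hqdef
  have hps : p = s + s := by rw [hpdef, hd, hf]; abel
  have hqt : q = t + t := by rw [hqdef, hd, hf]; abel
  have hpp : p * p = 0 := by
    have h4 : (s + s) * (s + s) = s * s + s * s + s * s + s * s := by noncomm_ring
    rw [hps, h4, hs]; simp
  have hqq : q * q = 0 := by
    have h4 : (t + t) * (t + t) = t * t + t * t + t * t + t * t := by noncomm_ring
    rw [hqt, h4, ht]; simp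
  have hpq : p + q = f + f := by rw [hpdef, hqdef]; abel
  have hanti : d * f = -(f * d) := by
    have hsum : d * f + f * d = (s * s + s * s) - (t * t + t * t) := by
      rw [hd, hf]; noncomm_ring
    rw [hs, ht] at hsum
    simp only [add_zero, sub_zero, zero_sub, zero_add, sub_self] at hsum
    exact eq_neg_of_add_eq_zero_left hsum
  set n := finrank F M with hn
  set N := 2 * (n + 1) with hN
  have hNn : n ≤ N := by omega
  have hN1 : 1 ≤ N := by omega
  have hcomm : d * f ^ N = f ^ N * d := by
    have h2c : Commute (f * f) d := by
      have hc : d * (f * f) = f * f * d := by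
        calc d * (f * f) = d * f * f := by rw [mul_assoc]
          _ = -(f * d) * f := by rw [hanti]
          _ = -(f * (d * f)) := by noncomm_ring
          _ = -(f * -(f * d)) := by rw [hanti]
          _ = f * f * d := by noncomm_ring
      exact hc.symm
    have hfN : f ^ N = (f * f) ^ (n + 1) := by
      rw [hN, pow_mul, sq]
    rw [hfN]
    exact ((h2c.pow_left (n + 1)).symm).eq
  set K := LinearMap.ker (f ^ N) with hK
  set R := LinearMap.range (f ^ N) with hR
  have hstab : LinearMap.ker (f ^ N) = LinearMap.ker (f ^ (N + N)) := by
    have hNN : finrank F M ≤ N + N := by omega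
    rw [Module.End.ker_pow_eq_ker_pow_finrank_of_le hNn,
      Module.End.ker_pow_eq_ker_pow_finrank_of_le hNN]
  have hdisjKR : Disjoint K R := by
    rw [Submodule.disjoint_def]
    intro z hzK hzR
    rw [hR, LinearMap.mem_range] at hzR
    obtain ⟨y, rfl⟩ := hzR
    rw [hK, LinearMap.mem_ker] at hzK
    have hy : y ∈ LinearMap.ker (f ^ (N + N)) := by
      rw [LinearMap.mem_ker, pow_add, Module.End.mul_apply]
      exact hzK
    rw [← hstab, LinearMap.mem_ker] at hy
    exact hy
  have hcodisKR : K ⊔ R = ⊤ := by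
    apply Submodule.eq_top_of_finrank_eq
    have heq := Submodule.finrank_sup_add_finrank_inf_eq K R
    rw [hdisjKR.eq_bot, finrank_bot] at heq
    have hrn := LinearMap.finrank_range_add_finrank_ker (f ^ N)
    have hle : finrank F ↥(K ⊔ R) ≤ finrank F M := Submodule.finrank_le _
    rw [hK, hR] at heq ⊢
    omega
  have hcompl : IsCompl K R := ⟨hdisjKR, codisjoint_iff.mpr hcodisKR⟩
  have hcf : Commute f (f ^ N) := (Commute.refl f).pow_right N
  have hKf : ∀ y ∈ K, f y ∈ K := by
    intro y hy
    rw [hK, LinearMap.mem_ker] at hy ⊢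
    rw [← Module.End.mul_apply, ← hcf.eq, Module.End.mul_apply, hy, map_zero]
  have hRf : ∀ y ∈ R, f y ∈ R := by
    intro y hy
    rw [hR, LinearMap.mem_range] at hy ⊢
    obtain ⟨z, rfl⟩ := hy
    exact ⟨f z, by rw [← Module.End.mul_apply, ← hcf.eq, Module.End.mul_apply]⟩
  have hRd : ∀ y ∈ R, d y ∈ R := by
    intro y hy
    rw [hR, LinearMap.mem_range] at hy ⊢
    obtain ⟨z, rfl⟩ := hy
    exact ⟨d z, by rw [← Module.End.mul_apply, ← hcomm, Module.End.mul_apply]⟩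
  have hRp : ∀ y ∈ R, p y ∈ R := by
    intro y hy
    rw [hpdef, LinearMap.add_apply]
    exact R.add_mem (hRf y hy) (hRd y hy)
  have hRq : ∀ y ∈ R, q y ∈ R := by
    intro y hy
    rw [hqdef, LinearMap.sub_apply]
    exact R.sub_mem (hRf y hy) (hRd y hy)
  apply glue_aux hcompl f hKf hRf
  · -- nilpotent part
    apply nilp_aux F (finrank F K) K le_rfl
    refine ⟨N, ?_⟩
    rw [Module.End.pow_restrict]
    apply LinearMap.ext
    intro y
    apply Subtype.ext
    rw [LinearMap.restrict_coe_apply]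
    have hy : (y : M) ∈ LinearMap.ker (f ^ N) := y.2
    rw [LinearMap.mem_ker] at hy
    simpa using hy
  · -- invertible part
    have hinj : Function.Injective (f.restrict hRf) := by
      rw [← LinearMap.ker_eq_bot]
      rw [eq_bot_iff]
      intro z hz
      rw [LinearMap.mem_ker] at hz
      have hfz : f ↑z = 0 := by
        have := congrArg (Subtype.val) hz
        rwa [LinearMap.restrict_coe_apply] at this
      have hzK : (z : M) ∈ K := by
        rw [hK, LinearMap.mem_ker]
        have hNsucc : N = (N - 1) + 1 := by omega
        rw [hNsucc, pow_succ, Module.End.mul_apply, hfz, map_zero]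
      have : (z : M) = 0 := by
        have := Submodule.disjoint_def.mp hdisjKR (z : M) hzK z.2
        exact this
      rw [Submodule.mem_bot]
      exact Subtype.ext this
    have hp' : (p.restrict hRp) * (p.restrict hRp) = 0 := by
      rw [restrict_mul_restrict']
      apply LinearMap.ext
      intro y
      apply Subtype.ext
      rw [LinearMap.restrict_coe_apply, hpp]
      simp
    have hq' : (q.restrict hRq) * (q.restrict hRq) = 0 := by
      rw [restrict_mul_restrict']
      apply LinearMap.ext
      intro y
      apply Subtype.ext
      rw [LinearMap.restrict_coe_apply, hqq]
      simp
    have hpq' : (p.restrict hRp) + (q.restrict hRq) = (f.restrict hRf) + (f.restrict hRf) := by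
      rw [restrict_add_restrict', restrict_add_restrict']
      exact restrict_eq_restrict _ _ hpq
    exact inv_case h2 (f.restrict hRf) (p.restrict hRp) (q.restrict hRq) hinj hp' hq' hpq'

end Main

/-- Botha/Wang–Wu. Let `F` be a field of characteristic different from 2
and `A ∈ M_n(F)`. Then `A` is a sum of two square-zero matrices iff there is an involution
`V` (`V² = 1`) with `A * V = -(V * A)`. -/
theorem stmt15 {n : ℕ} {F : Type*} [Field F] (hF : ringChar F ≠ 2)
    (A : Matrix (Fin n) (Fin n) F) :
    (∃ S T : Matrix (Fin n) (Fin n) F, S * S = 0 ∧ T * T = 0 ∧ A = S + T) ↔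
      (∃ V : Matrix (Fin n) (Fin n) F, V * V = 1 ∧ A * V = -(V * A)) := by
  have h2 : (2 : F) ≠ 0 := Ring.two_ne_zero hF
  constructor
  · rintro ⟨S, T, hS, hT, hA⟩
    set e := Matrix.toLinAlgEquiv' (R := F) (n := Fin n) with he
    have hs : e S * e S = 0 := by rw [← map_mul, hS, map_zero]
    have ht : e T * e T = 0 := by rw [← map_mul, hT, map_zero]
    have hf : e A = e S + e T := by rw [hA, map_add]
    obtain ⟨v, hv1, hv2⟩ := end_version h2 (e A) (e S) (e T) hs ht hf
    refine ⟨e.symm v, ?_, ?_⟩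
    · have : e.symm v * e.symm v = e.symm (v * v) := (map_mul e.symm v v).symm
      rw [this, hv1, map_one]
    · have hAv : e (A * e.symm v) = e A * v := by
        rw [map_mul, AlgEquiv.apply_symm_apply]
      have hvA : e (-(e.symm v * A)) = -(v * e A) := by
        rw [map_neg, map_mul, AlgEquiv.apply_symm_apply]
      apply e.injective
      rw [hAv, hvA]
      have : v * e A = -(e A * v) := hv2
      rw [this, neg_neg]
  · rintro ⟨V, hV, hAV⟩
    have key : V * A = -(A * V) := by
      rw [hAV, neg_neg]
    refine ⟨(2⁻¹ : F) • (A + A * V), (2⁻¹ : F) • (A - A * V), ?_, ?_, ?_⟩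
    · have e2 : A * V * A = -(A * (A * V)) := by
        calc A * V * A = A * (V * A) := by noncomm_ring
          _ = A * -(A * V) := by rw [key]
          _ = -(A * (A * V)) := by noncomm_ring
      have e1 : A * V * (A * V) = -(A * A) := by
        calc A * V * (A * V) = A * (V * A) * V := by noncomm_ring
          _ = A * -(A * V) * V := by rw [key]
          _ = -(A * A * (V * V)) := by noncomm_ring
          _ = -(A * A) := by rw [hV, mul_one]
      have expand : (A + A * V) * (A + A * V)
          = A * A + A * (A * V) + A * V * A + A * V * (A * V) := by noncomm_ring
      rw [smul_mul_smul_comm, expand, e1, e2]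
      simp
    · have e2 : A * V * A = -(A * (A * V)) := by
        calc A * V * A = A * (V * A) := by noncomm_ring
          _ = A * -(A * V) := by rw [key]
          _ = -(A * (A * V)) := by noncomm_ring
      have e1 : A * V * (A * V) = -(A * A) := by
        calc A * V * (A * V) = A * (V * A) * V := by noncomm_ring
          _ = A * -(A * V) * V := by rw [key]
          _ = -(A * A * (V * V)) := by noncomm_ring
          _ = -(A * A) := by rw [hV, mul_one]
      have expand : (A - A * V) * (A - A * V)
          = A * A - A * (A * V) - A * V * A + A * V * (A * V) := by noncomm_ring
      rw [smul_mul_smul_comm, expand, e1, e2]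
      simp
    · rw [← smul_add]
      have : (A + A * V) + (A - A * V) = (2 : F) • A := by
        rw [two_smul]; abel
      rw [this, smul_smul, inv_mul_cancel₀ h2, one_smul]
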